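/- arXiv:1210.6183 — 4 statements merged into one kernel-verified Lean document; each statement's English description precedes it below -/
import Mathlib

section
/- Let X be a connected simplicial graph with the simplicial metric, in which any chain S^1 ⊆ S^2 ⊆ ... ⊆ S^k of vertices (each consecutive pair joined by an 'inclusion' edge) implies that S^1 and S^k are joined by an edge. Then for any two vertices S and S', there exists a zig-zag path (a path alternating descents and ascents along inclusion edges, i.e. a concatenation of W-paths) from S to S' of length exactly 2^{k+1}, where k is a positive integer satisfying 2^k - 3 ≤ d(S,S') ≤ 2^{k+1}. -/
private lemma zz_prepend {V : Type*} [PartialOrder V] {a v1 b : V} (m' s' : ℕ) (f' : ℕ → V)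
    (hs' : s' ≤ 1) (h0 : f' 0 = v1) (hc : ∀ i, m' ≤ i → f' i = b)
    (hg : ∀ j, if (j + s') % 2 = 0 then f' (j + 1) ≤ f' j else f' j ≤ f' (j + 1))
    (hcomp : a ≤ v1 ∨ v1 ≤ a) :
    ∃ m : ℕ, ∃ s : ℕ, ∃ f : ℕ → V, m ≤ m' + 1 ∧ s ≤ 1 ∧ f 0 = a ∧ (∀ i, m ≤ i → f i = b) ∧
      ∀ j, if (j + s) % 2 = 0 then f (j + 1) ≤ f j else f j ≤ f (j + 1) := by
  interval_cases s'
  · rcases hcomp with hle | hle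
    · -- a ≤ v1, s' = 0 : cons, s = 1
      refine ⟨m' + 1, 1, fun i => if i = 0 then a else f' (i - 1), le_rfl, le_rfl, by simp, ?_, ?_⟩
      · intro i hi
        have : i ≠ 0 := by omega
        simp only [this, if_false]
        exact hc _ (by omega)
      · intro j
        rcases j with _ | j
        · simpa [h0] using hle
        · have := hg j
          have h2 : (j + 1 + 1) % 2 = (j + 0) % 2 := by omega
          simp only [h2]
          simpa using this
    · -- v1 ≤ a, s' = 0 : replace head, s = 0
      have h1 : f' 1 ≤ a := by
        have := hg 0
        simp at this
        rw [h0] at this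
        exact this.trans hle
      refine ⟨max m' 1, 0, fun i => if i = 0 then a else f' i, by omega, by omega, by simp, ?_, ?_⟩
      · intro i hi
        have : i ≠ 0 := by omega
        simp only [this, if_false]
        exact hc _ (by omega)
      · intro j
        rcases j with _ | j
        · simpa using h1
        · simpa using hg (j + 1)
  · rcases hcomp with hle | hle
    · -- a ≤ v1, s' = 1 : replace head, s = 1
      have h1 : a ≤ f' 1 := by
        have := hg 0
        simp at this
        rw [h0] at this
        exact hle.trans this
      refine ⟨max m' 1, 1, fun i => if i = 0 then a else f' i, by omega, le_rfl, by simp, ?_, ?_⟩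
      · intro i hi
        have : i ≠ 0 := by omega
        simp only [this, if_false]
        exact hc _ (by omega)
      · intro j
        rcases j with _ | j
        · simpa using h1
        · simpa using hg (j + 1)
    · -- v1 ≤ a, s' = 1 : cons, s = 0
      refine ⟨m' + 1, 0, fun i => if i = 0 then a else f' (i - 1), le_rfl, by omega, by simp, ?_, ?_⟩
      · intro i hi
        have : i ≠ 0 := by omega
        simp only [this, if_false]
        exact hc _ (by omega)
      · intro j
        rcases j with _ | j
        · simpa [h0] using hle
        · have := hg j
          have h2 : (j + 1 + 0) % 2 = (j + 1) % 2 := by omega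
          simp only [h2]
          simpa using this

private lemma zz_exists_good {V : Type*} [PartialOrder V] {G : SimpleGraph V}
    (hG : ∀ v w : V, G.Adj v w ↔ v ≠ w ∧ (v ≤ w ∨ w ≤ v)) :
    ∀ {a b : V} (p : G.Walk a b), ∃ m : ℕ, ∃ s : ℕ, ∃ f : ℕ → V, m ≤ p.length ∧ s ≤ 1 ∧ f 0 = a ∧
      (∀ i, m ≤ i → f i = b) ∧
      ∀ j, if (j + s) % 2 = 0 then f (j + 1) ≤ f j else f j ≤ f (j + 1) := by
  intro a b p
  induction p with
  | @nil u => exact ⟨0, 0, fun _ => u, le_rfl, Nat.zero_le _, rfl, fun i _ => rfl, fun j => by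
      split <;> exact le_rfl⟩
  | @cons u v w h p ih =>
    obtain ⟨m', s', f', hm', hs', h0, hc, hg⟩ := ih
    obtain ⟨m, s, f, hm, hs, h0', hc', hg'⟩ :=
      zz_prepend m' s' f' hs' h0 hc hg ((hG u v).mp h).2
    exact ⟨m, s, f, by simpa using hm.trans (by omega), hs, h0', hc', hg'⟩

/-- In a connected comparability graph of a partial order (where any two
comparable distinct vertices are adjacent, so monotone chains can be shortcut to single
edges), any two vertices `S`, `S'` are joined by a zig-zag path (alternating descents and
ascents along inclusion edges, equalities allowed) of length exactly `2^(k+1)`, where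
`k ≥ 1` satisfies `2^k - 3 ≤ d(S,S') ≤ 2^(k+1)`. -/
theorem stmt0 {V : Type*} [PartialOrder V] (G : SimpleGraph V)
    (hG : ∀ v w : V, G.Adj v w ↔ v ≠ w ∧ (v ≤ w ∨ w ≤ v))
    (hconn : G.Connected) (S S' : V) :
    ∃ k : ℕ, 1 ≤ k ∧ 2 ^ k - 3 ≤ G.dist S S' ∧ G.dist S S' ≤ 2 ^ (k + 1) ∧
      ∃ γ : ℕ → V, γ 0 = S ∧ γ (2 ^ (k + 1)) = S' ∧
        ∀ i < 2 ^ (k + 1), if i % 2 = 0 then γ (i + 1) ≤ γ i else γ i ≤ γ (i + 1) := by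
  obtain ⟨p, hp⟩ := hconn.exists_walk_length_eq_dist S S'
  set d := G.dist S S' with hd
  obtain ⟨m, s, f, hm, hs, h0, hc, hg⟩ := zz_exists_good hG p
  rw [hp] at hm
  set k := max 1 (Nat.log 2 (d + 1)) with hk
  have hkl : Nat.log 2 (d + 1) ≤ k := le_max_right _ _
  have hub : d + 1 < 2 ^ (k + 1) := by
    calc d + 1 < 2 ^ (Nat.log 2 (d + 1) + 1) := Nat.lt_pow_succ_log_self (by norm_num) _
    _ ≤ 2 ^ (k + 1) := Nat.pow_le_pow_right (by norm_num) (by omega)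
  have hlb : 2 ^ k ≤ d + 3 := by
    rcases Nat.eq_zero_or_pos d with h | h
    · rw [hk, h]; simp
    · have hlog : 1 ≤ Nat.log 2 (d + 1) := by
        exact (Nat.le_log_iff_pow_le (by norm_num) (by omega)).mpr (by omega)
      have hkeq : k = Nat.log 2 (d + 1) := by omega
      rw [hkeq]
      have := Nat.pow_log_le_self 2 (show d + 1 ≠ 0 by omega)
      omega
  refine ⟨k, le_max_left _ _, by omega, by omega, fun i => f (i - s), by simp [h0], ?_, ?_⟩
  · exact hc _ (by omega)
  · intro i hi
    rcases Nat.lt_or_ge i s with h | h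
    · have hi0 : i = 0 := by omega
      have hs1 : s = 1 := by omega
      subst hi0
      simp [hs1]
    · have h1 : i + 1 - s = (i - s) + 1 := by omega
      have h2 : (i - s + s) % 2 = i % 2 := by omega
      have := hg (i - s)
      rw [h2] at this
      show if i % 2 = 0 then f (i + 1 - s) ≤ f (i - s) else f (i - s) ≤ f (i + 1 - s)
      rw [h1]
      exact this
end

section
/- Let X be a connected graph with path metric d, let γ be a path in X, and let π be a projection to γ that is C-coarsely retracting and C-coarsely Lipschitz. Then for any vertex v of X and any index k in the domain of γ, the diameter of γ([π(v), k]) is at most C·(d(v, γ(k)) + 1) + C. -/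
private lemma chain_lemma {V : Type*} (G : SimpleGraph V) (hconn : G.Connected)
    (γ : ℕ → V) (C : ℝ) (hC : 0 ≤ C) (a : ℕ → ℕ) :
    ∀ m : ℕ, (∀ t < m, ∀ i ∈ Set.uIcc (a t) (a (t+1)), ∀ j ∈ Set.uIcc (a t) (a (t+1)),
      (G.dist (γ i) (γ j) : ℝ) ≤ C) →
    ∀ i ∈ Set.uIcc (a 0) (a m), ∀ j ∈ Set.uIcc (a 0) (a m),
      (G.dist (γ i) (γ j) : ℝ) ≤ C * m := by
  intro m
  induction m with
  | zero =>
    intro _ i hi j hj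
    simp only [Set.uIcc_self, Set.mem_singleton_iff] at hi hj
    subst hi; subst hj
    simp [SimpleGraph.dist_self]
  | succ m ih =>
    intro h i hi j hj
    have hsub : Set.uIcc (a 0) (a (m+1)) ⊆ Set.uIcc (a 0) (a m) ∪ Set.uIcc (a m) (a (m+1)) :=
      Set.uIcc_subset_uIcc_union_uIcc
    have hprev : ∀ t < m, ∀ i ∈ Set.uIcc (a t) (a (t+1)), ∀ j ∈ Set.uIcc (a t) (a (t+1)),
        (G.dist (γ i) (γ j) : ℝ) ≤ C := fun t ht => h t (ht.trans (Nat.lt_succ_self m))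
    have hlast := h m (Nat.lt_succ_self m)
    have ham : a m ∈ Set.uIcc (a 0) (a m) := Set.right_mem_uIcc
    have ham' : a m ∈ Set.uIcc (a m) (a (m+1)) := Set.left_mem_uIcc
    have key : ∀ x ∈ Set.uIcc (a 0) (a (m+1)), (G.dist (γ x) (γ (a m)) : ℝ) ≤ C * m + C := by
      intro x hx
      rcases hsub hx with hx1 | hx2
      · calc (G.dist (γ x) (γ (a m)) : ℝ) ≤ C * m := ih hprev x hx1 (a m) ham
          _ ≤ C * m + C := by linarith
      · calc (G.dist (γ x) (γ (a m)) : ℝ) ≤ C := hlast x hx2 (a m) ham'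
          _ ≤ C * m + C := by nlinarith
    rcases hsub hi with hi1 | hi2 <;> rcases hsub hj with hj1 | hj2
    · have := ih hprev i hi1 j hj1
      push_cast [Nat.succ_eq_add_one]
      nlinarith
    · have h1 := ih hprev i hi1 (a m) ham
      have h2 := hlast (a m) ham' j hj2
      have htri : (G.dist (γ i) (γ j) : ℝ) ≤ G.dist (γ i) (γ (a m)) + G.dist (γ (a m)) (γ j) := by
        exact_mod_cast hconn.dist_triangle
      push_cast
      linarith
    · have h1 := hlast i hi2 (a m) ham'
      have h2 := ih hprev (a m) ham j hj1
      have htri : (G.dist (γ i) (γ j) : ℝ) ≤ G.dist (γ i) (γ (a m)) + G.dist (γ (a m)) (γ j) := by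
        exact_mod_cast hconn.dist_triangle
      push_cast
      linarith
    · have := hlast i hi2 j hj2
      push_cast
      nlinarith
/-- if a projection `π` to a path `γ` (steps of length ≤ 2) in a connected
graph is `C`-coarsely retracting and `C`-coarsely Lipschitz, then for every vertex `v`
and index `k` in the domain of `γ`, the diameter of `γ([π v, k])` is at most
`C·(d(v, γ k) + 1) + C`. -/
theorem stmt4 {V : Type*} (G : SimpleGraph V) (hconn : G.Connected)
    (K : ℕ) (γ : ℕ → V) (hγ : ∀ i < K, G.dist (γ i) (γ (i + 1)) ≤ 2)
    (π : V → ℕ) (hπ : ∀ v, π v ≤ K) (C : ℝ) (hC : 0 ≤ C)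
    (hretr : ∀ k ≤ K, ∀ i ∈ Set.uIcc k (π (γ k)), ∀ j ∈ Set.uIcc k (π (γ k)),
      (G.dist (γ i) (γ j) : ℝ) ≤ C)
    (hLip : ∀ v w : V, G.dist v w ≤ 1 →
      ∀ i ∈ Set.uIcc (π v) (π w), ∀ j ∈ Set.uIcc (π v) (π w),
        (G.dist (γ i) (γ j) : ℝ) ≤ C) :
    ∀ v : V, ∀ k ≤ K, ∀ i ∈ Set.uIcc (π v) k, ∀ j ∈ Set.uIcc (π v) k,
      (G.dist (γ i) (γ j) : ℝ) ≤ C * ((G.dist v (γ k) : ℝ) + 1) + C := by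
  intro v k hk i hi j hj
  obtain ⟨p, hp⟩ := hconn.exists_walk_length_eq_dist v (γ k)
  set n := G.dist v (γ k) with hn
  set a : ℕ → ℕ := fun t => if t ≤ n then π (p.getVert t) else k with ha
  have ha0 : a 0 = π v := by simp [ha, p.getVert_zero]
  have han1 : a (n + 1) = k := by simp [ha]
  have hchain : ∀ t < n + 1, ∀ i ∈ Set.uIcc (a t) (a (t+1)), ∀ j ∈ Set.uIcc (a t) (a (t+1)),
      (G.dist (γ i) (γ j) : ℝ) ≤ C := by
    intro t ht
    rcases Nat.lt_or_ge t n with htn | htn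
    · have h1 : a t = π (p.getVert t) := by simp [ha, htn.le]
      have h2 : a (t+1) = π (p.getVert (t+1)) := by
        simp only [ha]; rw [if_pos (by omega : t+1 ≤ n)]
      rw [h1, h2]
      apply hLip
      have : G.Adj (p.getVert t) (p.getVert (t+1)) := p.adj_getVert_succ (by omega)
      calc G.dist (p.getVert t) (p.getVert (t+1)) ≤ this.toWalk.length := SimpleGraph.dist_le _
        _ = 1 := rfl
    · have htn' : t = n := by omega
      have h1 : a t = π (γ k) := by
        simp only [ha]; rw [if_pos (by omega : t ≤ n), htn', ← hp, p.getVert_length]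
      have h2 : a (t+1) = k := by
        simp only [ha]; rw [if_neg (by omega : ¬ t+1 ≤ n)]
      rw [h1, h2, Set.uIcc_comm]
      exact hretr k hk
  have := chain_lemma G hconn γ C hC a (n + 1) hchain
  rw [ha0, han1] at this
  have h := this i hi j hj
  calc (G.dist (γ i) (γ j) : ℝ) ≤ C * (n + 1) := by exact_mod_cast h
    _ ≤ C * ((n : ℝ) + 1) + C := by push_cast; nlinarith
end

section
/- Every geodesic in the sphere graph between two sphere systems S and S' is, after possibly deleting up to 4 edges at its extremities and reorganizing, a zig-zag path; consequently there exists a zig-zag path from S to S' of length at most d(S,S') + 4. -/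
private lemma zz_dist_le {V : Type*} [PartialOrder V] {G : SimpleGraph V}
    (hG : ∀ v w : V, G.Adj v w ↔ v ≠ w ∧ (v ≤ w ∨ w ≤ v)) (hconn : G.Connected) :
    ∀ (N : ℕ) (γ : ℕ → V), (∀ i < N, γ i ≤ γ (i + 1) ∨ γ (i + 1) ≤ γ i) →
      G.dist (γ 0) (γ N) ≤ N := by
  intro N
  induction N with
  | zero => intro γ _; simp [SimpleGraph.dist_self]
  | succ n ih =>
    intro γ h
    have h1 : G.dist (γ 0) (γ n) ≤ n := ih γ (fun i hi => h i (by omega))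
    have h2 : G.dist (γ n) (γ (n + 1)) ≤ 1 := by
      rcases eq_or_ne (γ n) (γ (n + 1)) with he | hne
      · simp [he, SimpleGraph.dist_self]
      · have hadj : G.Adj (γ n) (γ (n + 1)) := (hG _ _).2 ⟨hne, h n (by omega)⟩
        exact le_of_eq (SimpleGraph.dist_eq_one_iff_adj.2 hadj)
    calc G.dist (γ 0) (γ (n + 1)) ≤ G.dist (γ 0) (γ n) + G.dist (γ n) (γ (n + 1)) :=
          hconn.dist_triangle
      _ ≤ n + 1 := by omega

private lemma zz_main {V : Type*} [PartialOrder V] {G : SimpleGraph V}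
    (hG : ∀ v w : V, G.Adj v w ↔ v ≠ w ∧ (v ≤ w ∨ w ≤ v)) (hconn : G.Connected) :
    ∀ (d : ℕ) (S S' : V), G.dist S S' = d →
      (∃ γ : ℕ → V, γ 0 = S ∧ γ d = S' ∧
        ∀ i < d, if i % 2 = 0 then γ (i + 1) ≤ γ i else γ i ≤ γ (i + 1)) ∨
      (∃ γ : ℕ → V, γ 0 = S ∧ γ d = S' ∧
        ∀ i < d, if i % 2 = 0 then γ i ≤ γ (i + 1) else γ (i + 1) ≤ γ i) := by
  intro d
  induction d with
  | zero =>
    intro S S' hd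
    have hSS : S = S' := (hconn.dist_eq_zero_iff).1 hd
    left
    exact ⟨fun _ => S, rfl, hSS ▸ rfl, by intro i hi; omega⟩
  | succ d ih =>
    intro S S' hd
    obtain ⟨p, hp⟩ := hconn.exists_walk_length_eq_dist S S'
    rw [hd] at hp
    cases p with
    | nil => simp at hp
    | @cons _ w _ hadj q =>
      simp only [SimpleGraph.Walk.length_cons] at hp
      have hq : G.dist w S' ≤ d := by
        have := SimpleGraph.dist_le q; omega
      have hq2 : d ≤ G.dist w S' := by
        have ht : G.dist S S' ≤ G.dist S w + G.dist w S' := hconn.dist_triangle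
        have : G.dist S w ≤ 1 := le_of_eq (SimpleGraph.dist_eq_one_iff_adj.2 hadj)
        omega
      have hw : G.dist w S' = d := le_antisymm hq hq2
      obtain ⟨hne, hcmp⟩ := (hG S w).1 hadj
      -- helper: given a zig-zag of matching parity from w, prepend S
      rcases ih w S' hw with ⟨δ, hδ0, hδd, hδ⟩ | ⟨δ, hδ0, hδd, hδ⟩
      · -- δ is a Zig from w (first step down)
        rcases hcmp with hSw | hwS
        · -- S ≤ w : prepend gives Zag
          right
          refine ⟨fun i => if i = 0 then S else δ (i - 1), by simp, by simp [hδd], ?_⟩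
          intro i hi
          match i with
          | 0 => simpa [hδ0] using hSw
          | (k + 1) =>
            have hk := hδ k (by omega)
            rcases Nat.even_or_odd k with he | ho
            · have h2 : k % 2 = 0 := Nat.even_iff.1 he
              have h3 : (k + 1) % 2 = 1 := by omega
              simp only [h3] at *
              simpa [h2] using hk
            · have h2 : k % 2 = 1 := Nat.odd_iff.1 ho
              have h3 : (k + 1) % 2 = 0 := by omega
              simp only [h3] at *
              simpa [h2] using hk
        · -- w ≤ S but δ starts with a down step : contradiction (or d = 0)
          rcases Nat.eq_zero_or_pos d with hd0 | hdpos
          · -- d = 0 : δ is trivial, build directly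
            subst hd0
            left
            refine ⟨fun i => if i = 0 then S else w, by simp, by simp [← hδ0, hδd], ?_⟩
            intro i hi
            interval_cases i
            simpa using hwS
          · exfalso
            have hstep : δ 1 ≤ δ 0 := by simpa using hδ 0 hdpos
            have hδ1S : δ 1 ≤ S := le_trans hstep (hδ0 ▸ hwS)
            have htail : G.dist (δ 1) S' ≤ d - 1 := by
              have := zz_dist_le hG hconn (d - 1) (fun i => δ (i + 1)) (fun i hi => by
                have := hδ (i + 1) (by omega)
                rcases Nat.even_or_odd (i + 1) with he | ho
                · have h2 : (i + 1) % 2 = 0 := Nat.even_iff.1 he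
                  simp only [h2] at this
                  right; exact this
                · have h2 : (i + 1) % 2 = 1 := Nat.odd_iff.1 ho
                  simp only [h2] at this
                  left; exact this)
              simpa [show d - 1 + 1 = d by omega, hδd] using this
            have hSd : G.dist S S' ≤ d := by
              rcases eq_or_ne S (δ 1) with he | hne2
              · rw [he]; omega
              · have hadj2 : G.Adj S (δ 1) := (hG _ _).2 ⟨hne2, Or.inr hδ1S⟩
                have h1 : G.dist S (δ 1) ≤ 1 := le_of_eq (SimpleGraph.dist_eq_one_iff_adj.2 hadj2)
                have := hconn.dist_triangle (u := S) (v := δ 1) (w := S')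
                omega
            omega
      · -- δ is a Zag from w (first step up)
        rcases hcmp with hSw | hwS
        · -- S ≤ w but δ starts with an up step : contradiction (or d = 0)
          rcases Nat.eq_zero_or_pos d with hd0 | hdpos
          · subst hd0
            right
            refine ⟨fun i => if i = 0 then S else w, by simp, by simp [← hδ0, hδd], ?_⟩
            intro i hi
            interval_cases i
            simpa using hSw
          · exfalso
            have hstep : δ 0 ≤ δ 1 := by simpa using hδ 0 hdpos
            have hSδ1 : S ≤ δ 1 := le_trans hSw (hδ0 ▸ hstep)
            have htail : G.dist (δ 1) S' ≤ d - 1 := by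
              have := zz_dist_le hG hconn (d - 1) (fun i => δ (i + 1)) (fun i hi => by
                have := hδ (i + 1) (by omega)
                rcases Nat.even_or_odd (i + 1) with he | ho
                · have h2 : (i + 1) % 2 = 0 := Nat.even_iff.1 he
                  simp only [h2] at this
                  left; exact this
                · have h2 : (i + 1) % 2 = 1 := Nat.odd_iff.1 ho
                  simp only [h2] at this
                  right; exact this)
              simpa [show d - 1 + 1 = d by omega, hδd] using this
            have hSd : G.dist S S' ≤ d := by
              rcases eq_or_ne S (δ 1) with he | hne2
              · rw [he]; omega
              · have hadj2 : G.Adj S (δ 1) := (hG _ _).2 ⟨hne2, Or.inl hSδ1⟩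
                have h1 : G.dist S (δ 1) ≤ 1 := le_of_eq (SimpleGraph.dist_eq_one_iff_adj.2 hadj2)
                have := hconn.dist_triangle (u := S) (v := δ 1) (w := S')
                omega
            omega
        · -- w ≤ S : prepend gives Zig
          left
          refine ⟨fun i => if i = 0 then S else δ (i - 1), by simp, by simp [hδd], ?_⟩
          intro i hi
          match i with
          | 0 => simpa [hδ0] using hwS
          | (k + 1) =>
            have hk := hδ k (by omega)
            rcases Nat.even_or_odd k with he | ho
            · have h2 : k % 2 = 0 := Nat.even_iff.1 he
              have h3 : (k + 1) % 2 = 1 := by omega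
              simp only [h3] at *
              simpa [h2] using hk
            · have h2 : k % 2 = 1 := Nat.odd_iff.1 ho
              have h3 : (k + 1) % 2 = 0 := by omega
              simp only [h3] at *
              simpa [h2] using hk

/-- in the connected comparability graph of a partial order (which has the
chain-shortcut property: comparable distinct vertices are adjacent), any two vertices
`S, S'` are joined by a zig-zag path (alternating `⊇` and `⊆` steps, equalities allowed)
of length at most `d(S,S') + 4`. -/
theorem stmt14 {V : Type*} [PartialOrder V] (G : SimpleGraph V)
    (hG : ∀ v w : V, G.Adj v w ↔ v ≠ w ∧ (v ≤ w ∨ w ≤ v))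
    (hconn : G.Connected) (S S' : V) :
    ∃ (N : ℕ) (γ : ℕ → V), N ≤ G.dist S S' + 4 ∧ γ 0 = S ∧ γ N = S' ∧
      ∀ i < N, if i % 2 = 0 then γ (i + 1) ≤ γ i else γ i ≤ γ (i + 1) := by
  set d := G.dist S S' with hd
  rcases zz_main hG hconn d S S' rfl with ⟨γ, h0, hN, hZ⟩ | ⟨γ, h0, hN, hZ⟩
  · exact ⟨d, γ, by omega, h0, hN, hZ⟩
  · -- prepend an equality step
    refine ⟨d + 1, fun i => if i = 0 then S else γ (i - 1), by omega, by simp, by simp [hN], ?_⟩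
    intro i hi
    match i with
    | 0 => simp [h0]
    | (k + 1) =>
      have hk := hZ k (by omega)
      rcases Nat.even_or_odd k with he | ho
      · have h2 : k % 2 = 0 := Nat.even_iff.1 he
        have h3 : (k + 1) % 2 = 1 := by omega
        simp only [h3] at *
        simpa [h2] using hk
      · have h2 : k % 2 = 1 := Nat.odd_iff.1 ho
        have h3 : (k + 1) % 2 = 0 := by omega
        simp only [h3] at *
        simpa [h2] using hk
end

section
/- Let X and Y be connected graphs and τ : X → Y a map that is surjective on vertices and 1-Lipschitz (adjacent vertices map to equal or adjacent vertices). If X is Gromov hyperbolic and the fibers of τ are quasi-convex in the sense of Kapovich–Rafi (for any two vertices S, S' of X with τ(S) and τ(S') sharing a common value/structure, some path in X from S to S' projects to a set of uniformly bounded diameter), then Y is Gromov hyperbolic. -/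
/-- Gromov hyperbolicity of a graph via the four-point condition on the graph metric. -/
def GraphHyperbolic {V : Type*} (G : SimpleGraph V) : Prop :=
  ∃ δ : ℝ, 0 ≤ δ ∧ ∀ x y z w : V,
    (G.dist x y : ℝ) + G.dist z w ≤
      max ((G.dist x z : ℝ) + G.dist y w) ((G.dist x w : ℝ) + G.dist y z) + 2 * δ

namespace KR17

open SimpleGraph

variable {V : Type*} {G : SimpleGraph V}

/-- A subwalk between two `getVert`s of a walk, whose vertices are `getVert`s in between. -/
lemma exists_subwalk {u v : V} (p : G.Walk u v) :
    ∀ i j : ℕ, i ≤ j → j ≤ p.length →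
    ∃ q : G.Walk (p.getVert i) (p.getVert j), q.length = j - i ∧
      ∀ x ∈ q.support, ∃ k, i ≤ k ∧ k ≤ j ∧ x = p.getVert k := by
  induction p with
  | nil =>
    intro i j hij hj
    simp only [Walk.length_nil, Nat.le_zero] at hj
    subst hj
    simp only [Nat.le_zero] at hij
    subst hij
    exact ⟨Walk.nil' _, by simp, by intro x hx; simp at hx; exact ⟨0, le_refl _, le_refl _, hx⟩⟩
  | @cons a b c hadj p ih =>
    intro i j hij hj
    match i, j with
    | 0, 0 =>
      refine ⟨(Walk.nil' a).copy rfl (Walk.getVert_zero _).symm, (Walk.length_copy _ _ _).trans Walk.length_nil, ?_⟩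
      intro x hx
      replace hx : x = a := List.mem_singleton.mp hx
      exact ⟨0, le_refl _, le_refl _, by simp [hx]⟩
    | 0, (j' + 1) =>
      have hj' : j' ≤ p.length := by simpa [Walk.length_cons] using hj
      obtain ⟨q, hql, hqs⟩ := ih 0 j' (Nat.zero_le _) hj'
      refine ⟨((q.copy (Walk.getVert_zero _) rfl).cons hadj).copy
        (Walk.getVert_zero _).symm (Walk.getVert_cons_succ _ _).symm, ?_, ?_⟩
      · rw [Walk.length_copy, Walk.length_cons, Walk.length_copy, hql]; omega
      · intro x hx
        simp only [Walk.support_copy, Walk.support_cons, List.mem_cons] at hx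
        rcases hx with rfl | hx
        · exact ⟨0, le_refl _, Nat.zero_le _, by simp⟩
        · obtain ⟨k, _, hk2, rfl⟩ := hqs x hx
          exact ⟨k + 1, Nat.zero_le _, Nat.succ_le_succ hk2,
            (Walk.getVert_cons_succ _ _).symm⟩
    | (i' + 1), (j' + 1) =>
      have hij' : i' ≤ j' := Nat.succ_le_succ_iff.mp hij
      have hj' : j' ≤ p.length := by simpa [Walk.length_cons] using hj
      obtain ⟨q, hql, hqs⟩ := ih i' j' hij' hj'
      refine ⟨q.copy (Walk.getVert_cons_succ _ _).symm (Walk.getVert_cons_succ _ _).symm, ?_, ?_⟩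
      · simpa using hql
      · intro x hx
        simp only [Walk.support_copy] at hx
        obtain ⟨k, hk1, hk2, rfl⟩ := hqs x hx
        exact ⟨k + 1, Nat.succ_le_succ hk1, Nat.succ_le_succ hk2,
          (Walk.getVert_cons_succ _ _).symm⟩

lemma dist_getVert_le {u v : V} (p : G.Walk u v) {i j : ℕ} (hij : i ≤ j) (hj : j ≤ p.length) :
    G.dist (p.getVert i) (p.getVert j) ≤ j - i := by
  obtain ⟨q, hql, -⟩ := exists_subwalk p i j hij hj
  simpa [hql] using SimpleGraph.dist_le q

/-- On a geodesic walk, distances between vertices are the differences of positions. -/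
lemma geodesic_dist_getVert (hconn : G.Connected) {u v : V} (p : G.Walk u v)
    (hp : p.length = G.dist u v) {i j : ℕ} (hij : i ≤ j) (hj : j ≤ p.length) :
    G.dist (p.getVert i) (p.getVert j) = j - i := by
  have h1 : G.dist u (p.getVert i) ≤ i := by
    have := dist_getVert_le p (Nat.zero_le i) (le_trans hij hj)
    simpa using this
  have h2 : G.dist (p.getVert j) v ≤ p.length - j := by
    have := dist_getVert_le p hj (le_refl p.length)
    simpa [Walk.getVert_length] using this
  have h3 : G.dist (p.getVert i) (p.getVert j) ≤ j - i := dist_getVert_le p hij hj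
  have htri : G.dist u v ≤ G.dist u (p.getVert i) + G.dist (p.getVert i) (p.getVert j)
      + G.dist (p.getVert j) v := by
    calc G.dist u v ≤ G.dist u (p.getVert j) + G.dist (p.getVert j) v :=
          hconn.dist_triangle
    _ ≤ G.dist u (p.getVert i) + G.dist (p.getVert i) (p.getVert j) + G.dist (p.getVert j) v := by
          have := hconn.dist_triangle (u := u) (v := p.getVert i) (w := p.getVert j)
          omega
  omega

lemma geodesic_dist_getVert₀ (hconn : G.Connected) {u v : V} (p : G.Walk u v)
    (hp : p.length = G.dist u v) {i : ℕ} (hi : i ≤ p.length) :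
    G.dist u (p.getVert i) = i := by
  have := geodesic_dist_getVert hconn p hp (Nat.zero_le i) hi
  simpa using this

lemma geodesic_dist_getVert₁ (hconn : G.Connected) {u v : V} (p : G.Walk u v)
    (hp : p.length = G.dist u v) {i : ℕ} (hi : i ≤ p.length) :
    G.dist (p.getVert i) v = p.length - i := by
  have := geodesic_dist_getVert hconn p hp hi (le_refl p.length)
  simpa [Walk.getVert_length] using this

lemma getVert_mem_support {u v : V} (p : G.Walk u v) {i : ℕ} (hi : i ≤ p.length) :
    p.getVert i ∈ p.support :=
  Walk.mem_support_iff_exists_getVert.mpr ⟨i, rfl, hi⟩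


section Xside

variable {V : Type*} {G : SimpleGraph V}

/-- Doubled Gromov-product inequality derived from the four-point condition. -/
lemma gp_chain (δ : ℝ)
    (h4 : ∀ x y z w : V, (G.dist x y : ℝ) + G.dist z w ≤
      max ((G.dist x z : ℝ) + G.dist y w) ((G.dist x w : ℝ) + G.dist y z) + 2 * δ)
    (a x y z : V) :
    min ((G.dist a x : ℝ) + G.dist a y - G.dist x y)
        ((G.dist a y : ℝ) + G.dist a z - G.dist y z) - 2*δ ≤
      (G.dist a x : ℝ) + G.dist a z - G.dist x z := by
  have cc : ∀ p q : V, (G.dist p q : ℝ) = (G.dist q p : ℝ) := by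
    intro p q; exact_mod_cast congrArg (Nat.cast : ℕ → ℝ) (SimpleGraph.dist_comm (G := G) (u := p) (v := q))
  have H := h4 x z y a
  rcases le_total ((G.dist x y : ℝ) + G.dist z a) ((G.dist x a : ℝ) + G.dist z y) with hc | hc
  · rw [max_eq_right hc] at H
    have hm : min ((G.dist a x : ℝ) + G.dist a y - G.dist x y)
        ((G.dist a y : ℝ) + G.dist a z - G.dist y z) ≤
        (G.dist a y : ℝ) + G.dist a z - G.dist y z := min_le_right _ _
    have e1 := cc y a; have e2 := cc x a; have e3 := cc z y; have e4 := cc z a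
    linarith
  · rw [max_eq_left hc] at H
    have hm : min ((G.dist a x : ℝ) + G.dist a y - G.dist x y)
        ((G.dist a y : ℝ) + G.dist a z - G.dist y z) ≤
        (G.dist a x : ℝ) + G.dist a y - G.dist x y := min_le_left _ _
    have e1 := cc y a; have e2 := cc x a; have e3 := cc z a; have e4 := cc x y
    linarith

/-- Geodesic triangles in a four-point hyperbolic graph are `4δ`-slim (Rips condition). -/
lemma rips (hconn : G.Connected)
    (geo : ∀ a b : V, G.Walk a b) (hgeo : ∀ a b, (geo a b).length = G.dist a b)
    (δ : ℝ) (hδ0 : 0 ≤ δ)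
    (h4 : ∀ x y z w : V, (G.dist x y : ℝ) + G.dist z w ≤
      max ((G.dist x z : ℝ) + G.dist y w) ((G.dist x w : ℝ) + G.dist y z) + 2 * δ)
    (a b c : V) : ∀ u ∈ (geo a b).support,
      ∃ v, (v ∈ (geo a c).support ∨ v ∈ (geo c b).support) ∧ (G.dist u v : ℝ) ≤ 4 * δ := by
  have cc : ∀ p q : V, (G.dist p q : ℝ) = (G.dist q p : ℝ) := by
    intro p q; exact_mod_cast congrArg (Nat.cast : ℕ → ℝ) (SimpleGraph.dist_comm (G := G) (u := p) (v := q))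
  have htri : ∀ p q s : V, (G.dist p s : ℝ) ≤ (G.dist p q : ℝ) + (G.dist q s : ℝ) := by
    intro p q s; exact_mod_cast hconn.dist_triangle (u := p) (v := q) (w := s)
  intro u hu
  obtain ⟨t, hgv, ht⟩ := SimpleGraph.Walk.mem_support_iff_exists_getVert.mp hu
  subst hgv
  set u := (geo a b).getVert t with hudef
  have e_n : ((geo a b).length : ℝ) = (G.dist a b : ℝ) := by exact_mod_cast hgeo a b
  have e_dau : (G.dist a u : ℝ) = t := by
    exact_mod_cast geodesic_dist_getVert₀ hconn _ (hgeo a b) ht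
  have e_dub : (G.dist u b : ℝ) = ((geo a b).length : ℝ) - t := by
    have h := geodesic_dist_getVert₁ hconn _ (hgeo a b) ht
    have : ((G.dist u b : ℕ) : ℝ) = (((geo a b).length - t : ℕ) : ℝ) := by exact_mod_cast h
    rwa [Nat.cast_sub ht] at this
  rcases le_or_gt (2*(t:ℝ)) ((G.dist a b : ℝ) + G.dist a c - G.dist b c) with hcase | hcase
  · -- near the side [a,c]
    have htc : t ≤ (geo a c).length := by
      rw [hgeo a c]
      have h1 : (G.dist a b : ℝ) ≤ G.dist a c + G.dist c b := htri a c b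
      have h2 : (t : ℝ) ≤ (G.dist a c : ℝ) := by
        have := cc c b; linarith
      exact_mod_cast h2
    set v := (geo a c).getVert t with hvdef
    refine ⟨v, Or.inl (getVert_mem_support _ htc), ?_⟩
    have e_dav : (G.dist a v : ℝ) = t := by
      exact_mod_cast geodesic_dist_getVert₀ hconn _ (hgeo a c) htc
    have e_dvc : (G.dist v c : ℝ) = ((geo a c).length : ℝ) - t := by
      have h := geodesic_dist_getVert₁ hconn _ (hgeo a c) htc
      have : ((G.dist v c : ℕ) : ℝ) = (((geo a c).length - t : ℕ) : ℝ) := by exact_mod_cast h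
      rwa [Nat.cast_sub htc] at this
    have e_nac : ((geo a c).length : ℝ) = (G.dist a c : ℝ) := by exact_mod_cast hgeo a c
    have P2 := gp_chain δ h4 a b c v
    have P1 := gp_chain δ h4 a u b v
    have L2 : 2*(t:ℝ) - 2*δ ≤ (G.dist a b : ℝ) + G.dist a v - G.dist b v := by
      refine le_trans ?_ P2
      have hmin : 2*(t:ℝ) ≤ min ((G.dist a b : ℝ) + G.dist a c - G.dist b c)
          ((G.dist a c : ℝ) + G.dist a v - G.dist c v) := by
        refine le_min (by linarith) ?_
        have := cc v c; linarith
      linarith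
    have L1 : 2*(t:ℝ) - 2*δ - 2*δ ≤ (G.dist a u : ℝ) + G.dist a v - G.dist u v := by
      refine le_trans ?_ P1
      have hmin : 2*(t:ℝ) - 2*δ ≤ min ((G.dist a u : ℝ) + G.dist a b - G.dist u b)
          ((G.dist a b : ℝ) + G.dist a v - G.dist b v) := by
        refine le_min (by linarith) (by linarith)
      linarith
    linarith
  · -- near the side [c,b]
    set s := (geo a b).length - t with hsdef
    have e_s : (s : ℝ) = ((geo a b).length : ℝ) - t := by
      rw [hsdef]; rw [Nat.cast_sub ht]
    have hsc : s ≤ (geo c b).length := by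
      rw [hgeo c b]
      have h1 : (G.dist a b : ℝ) ≤ G.dist a c + G.dist c b := htri a c b
      have h2 : (s : ℝ) ≤ (G.dist c b : ℝ) := by
        have := cc b c; linarith
      exact_mod_cast h2
    set i := (geo c b).length - s with hidef
    set v := (geo c b).getVert i with hvdef
    have hic : i ≤ (geo c b).length := Nat.sub_le _ _
    refine ⟨v, Or.inr (getVert_mem_support _ hic), ?_⟩
    have e_dcv : (G.dist c v : ℝ) = ((geo c b).length : ℝ) - s := by
      have h := geodesic_dist_getVert₀ hconn _ (hgeo c b) hic
      have : ((G.dist c v : ℕ) : ℝ) = (((geo c b).length - s : ℕ) : ℝ) := by exact_mod_cast h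
      rwa [Nat.cast_sub hsc] at this
    have e_dvb : (G.dist v b : ℝ) = s := by
      have h := geodesic_dist_getVert₁ hconn _ (hgeo c b) hic
      have h2 : (geo c b).length - i = s := by omega
      rw [h2] at h
      exact_mod_cast h
    have e_ncb : ((geo c b).length : ℝ) = (G.dist c b : ℝ) := by exact_mod_cast hgeo c b
    have P2 := gp_chain δ h4 b a c v
    have P1 := gp_chain δ h4 b u a v
    have L2 : 2*(s:ℝ) - 2*δ ≤ (G.dist b a : ℝ) + G.dist b v - G.dist a v := by
      refine le_trans ?_ P2
      have hmin : 2*(s:ℝ) ≤ min ((G.dist b a : ℝ) + G.dist b c - G.dist a c)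
          ((G.dist b c : ℝ) + G.dist b v - G.dist c v) := by
        refine le_min ?_ ?_
        · have h1 := cc b a; have h2 := cc b c; linarith
        · have h1 := cc b c; have h2 := cc b v; linarith
      linarith
    have L1 : 2*(s:ℝ) - 2*δ - 2*δ ≤ (G.dist b u : ℝ) + G.dist b v - G.dist u v := by
      refine le_trans ?_ P1
      have hmin : 2*(s:ℝ) - 2*δ ≤ min ((G.dist b u : ℝ) + G.dist b a - G.dist u a)
          ((G.dist b a : ℝ) + G.dist b v - G.dist a v) := by
        refine le_min ?_ (by linarith)
        have h1 := cc b u; have h2 := cc u a; have h3 := cc b a; linarith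
      linarith
    have h1 := cc b u; have h2 := cc b v; linarith

end Xside

section Criterion

variable {V : Type*} {G : SimpleGraph V}

/-- Subdivision lemma: points of `A y y'` are within `C + Δ·k` of any walk of length `≤ 2^k`. -/
lemma subdiv (hconn : G.Connected) (A : V → V → Set V) (C Δ : ℕ)
    (hlocal : ∀ y y' : V, G.dist y y' ≤ 1 → ∀ z ∈ A y y', G.dist z y ≤ C)
    (hslim : ∀ y1 y2 y3 : V, ∀ z ∈ A y1 y2, ∃ z', (z' ∈ A y1 y3 ∨ z' ∈ A y3 y2) ∧ G.dist z z' ≤ Δ) :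
    ∀ k : ℕ, ∀ y y' : V, ∀ W : G.Walk y y', W.length ≤ 2^k → ∀ z ∈ A y y',
      ∃ v ∈ W.support, G.dist z v ≤ C + Δ * k := by
  intro k
  induction k with
  | zero =>
    intro y y' W hW z hz
    refine ⟨y, W.start_mem_support, ?_⟩
    have hd : G.dist y y' ≤ 1 := le_trans (SimpleGraph.dist_le W) (by simpa using hW)
    simpa using hlocal y y' hd z hz
  | succ k ih =>
    intro y y' W hW z hz
    by_cases hsmall : W.length ≤ 2^k
    · obtain ⟨v, hv, hd⟩ := ih y y' W hsmall z hz
      exact ⟨v, hv, le_trans hd (Nat.add_le_add_left (Nat.mul_le_mul_left Δ (Nat.le_succ k)) C)⟩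
    · push_neg at hsmall
      have hm : 2^k ≤ W.length := le_of_lt hsmall
      obtain ⟨q1, hq1l, hq1s⟩ := exists_subwalk W 0 (2^k) (Nat.zero_le _) hm
      obtain ⟨q2, hq2l, hq2s⟩ := exists_subwalk W (2^k) W.length hm (le_refl _)
      obtain ⟨z', hz'or, hdz'⟩ := hslim y y' (W.getVert (2^k)) z hz
      have hfin : C + Δ * (k+1) = Δ + (C + Δ * k) := by ring
      rcases hz'or with hz' | hz'
      · have hlen : (q1.copy (Walk.getVert_zero W) rfl).length ≤ 2^k := by
          simp [Walk.length_copy, hq1l]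
        obtain ⟨v, hv, hd⟩ := ih y (W.getVert (2^k)) (q1.copy (Walk.getVert_zero W) rfl) hlen z' hz'
        rw [Walk.support_copy] at hv
        obtain ⟨kk, _, hkk2, rfl⟩ := hq1s v hv
        refine ⟨W.getVert kk, getVert_mem_support _ (le_trans hkk2 hm), ?_⟩
        rw [hfin]
        exact le_trans hconn.dist_triangle (Nat.add_le_add hdz' hd)
      · have hlen : (q2.copy rfl (Walk.getVert_length W)).length ≤ 2^k := by
          rw [Walk.length_copy, hq2l]
          omega
        obtain ⟨v, hv, hd⟩ := ih (W.getVert (2^k)) y' (q2.copy rfl (Walk.getVert_length W)) hlen z' hz'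
        rw [Walk.support_copy] at hv
        obtain ⟨kk, _, hkk2, rfl⟩ := hq2s v hv
        refine ⟨W.getVert kk, getVert_mem_support _ hkk2, ?_⟩
        rw [hfin]
        exact le_trans hconn.dist_triangle (Nat.add_le_add hdz' hd)

lemma sq_le_pow : ∀ m : ℕ, 17 ≤ m → (m+2)^2 ≤ 2^m := by
  intro m hm
  induction m, hm using Nat.le_induction with
  | base => norm_num
  | succ n hn ih =>
    have h1 : (n+1+2)^2 ≤ 2*(n+2)^2 := by nlinarith
    calc (n+1+2)^2 ≤ 2*(n+2)^2 := h1
    _ ≤ 2*2^n := by omega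
    _ = 2^(n+1) := by ring

lemma arith_solve (A B r M : ℕ)
    (hM : M = A + B*(8*(A+B+1)+18) + (8*(A+B+1)+18))
    (h : r ≤ A + B * Nat.clog 2 (2*r + 2*M + 4*B + 4)) : r ≤ M := by
  by_contra hc
  push_neg at hc
  set K := 8*(A+B+1)+18 with hK
  have hBK : B ≤ B * K := Nat.le_mul_of_pos_right B (by omega)
  have hBM : B ≤ M := by omega
  have hKM : K ≤ M := by omega
  have harg : 2*r + 2*M + 4*B + 4 ≤ 8*r := by omega
  have h' : r ≤ A + B * Nat.clog 2 (8*r) := by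
    refine le_trans h (Nat.add_le_add_left (Nat.mul_le_mul_left B (Nat.clog_mono_right 2 harg)) A)
  set k := Nat.clog 2 (8*r) with hkdef
  rcases le_or_gt k K with hkK | hkK
  · have : r ≤ A + B * K := le_trans h' (Nat.add_le_add_left (Nat.mul_le_mul_left B hkK) A)
    omega
  · have hr1 : 1 < 8*r := by omega
    have h2 : 2^(k-1) < 8*r := by
      have := Nat.pow_pred_clog_lt_self (b := 2) (by norm_num) hr1
      simpa [hkdef] using this
    have h3 : 8*r ≤ 8*(A + B*k) := by omega
    have h4 : 8*(A + B*k) ≤ 8*(A+B+1)*(k+1) := by nlinarith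
    have h5 : 8*(A+B+1)*(k+1) ≤ K*(k+1) := Nat.mul_le_mul_right _ (by omega)
    have h6 : K*(k+1) ≤ k*(k+1) := Nat.mul_le_mul_right _ (le_of_lt hkK)
    have h7 : k*(k+1) ≤ (k+1)^2 := by nlinarith
    have h8 : (k+1)^2 ≤ 2^(k-1) := by
      have hk17 : 17 ≤ k - 1 := by omega
      have := sq_le_pow (k-1) hk17
      have he : k - 1 + 2 = k + 1 := by omega
      rwa [he] at this
    omega

/-- The uniform constant for the bootstrap. -/
def KRM1 (C Δ : ℕ) : ℕ :=
  (2*Δ + C) + Δ*(8*((2*Δ + C)+Δ+1)+18) + (8*((2*Δ + C)+Δ+1)+18)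

lemma le_KRM1 (C Δ : ℕ) : 2*Δ + C ≤ KRM1 C Δ :=
  le_trans (Nat.le_add_right _ _) (Nat.le_add_right _ _)

/-- Bootstrap: every point of `A y y'` is uniformly close to every geodesic from `y` to `y'`. -/
lemma bootstrap (hconn : G.Connected) (A : V → V → Set V) (C Δ : ℕ)
    (hsingle : ∀ y : V, ∀ z ∈ A y y, z = y)
    (hlocal : ∀ y y' : V, G.dist y y' ≤ 1 → ∀ z ∈ A y y', G.dist z y ≤ C)
    (hslim : ∀ y1 y2 y3 : V, ∀ z ∈ A y1 y2, ∃ z', (z' ∈ A y1 y3 ∨ z' ∈ A y3 y2) ∧ G.dist z z' ≤ Δ) :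
    ∀ n : ℕ, ∀ y y' : V, ∀ g : G.Walk y y', g.length = G.dist y y' → g.length ≤ n →
      ∀ z ∈ A y y', ∃ t, t ≤ g.length ∧ G.dist z (g.getVert t) ≤ KRM1 C Δ := by
  intro n
  induction n using Nat.strong_induction_on with
  | _ n ih =>
  intro y y' g hg hgn z hz
  set N := g.length with hN
  obtain ⟨t0, ht0mem, hmin⟩ := Finset.exists_min_image (Finset.range (N+1))
    (fun t => G.dist z (g.getVert t)) ⟨0, by simp⟩
  have ht0 : t0 ≤ N := by have := Finset.mem_range.mp ht0mem; omega
  set r := G.dist z (g.getVert t0) with hr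
  refine ⟨t0, ht0, ?_⟩
  have hΔM1 : 2*Δ + C ≤ KRM1 C Δ := le_KRM1 C Δ
  by_cases hN0 : N = 0
  · have hyy : y = y' := by
      have : g.length = 0 := by omega
      exact (SimpleGraph.Walk.eq_of_length_eq_zero this)
    subst hyy
    have hzy := hsingle y z hz
    have h0 : r ≤ G.dist z (g.getVert 0) := hmin 0 (Finset.mem_range.mpr (by omega))
    rw [Walk.getVert_zero, hzy] at h0
    simp only [SimpleGraph.dist_self] at h0
    omega
  · have hN1 : 1 ≤ N := by omega
    set S := r + 2*Δ + (KRM1 C Δ) + 2 with hS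
    set ta := t0 - S with hta
    set tb := min (t0 + S) N with htb
    have hta_le : ta ≤ N := by omega
    have htb_le : tb ≤ N := by omega
    obtain ⟨z₁, hz₁or, hdz₁⟩ := hslim y y' (g.getVert ta) z hz
    rcases hz₁or with hz₁ | hz₁
    · -- z₁ ∈ A y (g.getVert ta)
      by_cases hta0 : ta = 0
      · rw [hta0, Walk.getVert_zero] at hz₁
        have hz₁y := hsingle y z₁ hz₁
        have h0 : r ≤ G.dist z (g.getVert 0) := hmin 0 (Finset.mem_range.mpr (by omega))
        rw [Walk.getVert_zero] at h0
        have : G.dist z y ≤ Δ := by rw [← hz₁y]; exact hdz₁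
        omega
      · have htaS : t0 = ta + S := by omega
        obtain ⟨q, hql, hqs⟩ := exists_subwalk g 0 ta (Nat.zero_le _) hta_le
        set q' := q.copy (Walk.getVert_zero g) rfl with hq'
        have hq'len : q'.length = ta := by rw [Walk.length_copy, hql]; omega
        have hdya : G.dist y (g.getVert ta) = ta := geodesic_dist_getVert₀ hconn g hg hta_le
        have hq'geo : q'.length = G.dist y (g.getVert ta) := by rw [hq'len, hdya]
        have hq'n : q'.length < n := by omega
        obtain ⟨t', ht'le, ht'd⟩ := ih q'.length hq'n y (g.getVert ta) q' hq'geo (le_refl _) z₁ hz₁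
        have hv : q'.getVert t' ∈ q'.support := getVert_mem_support _ ht'le
        rw [Walk.support_copy] at hv
        obtain ⟨k, hk1, hk2, hkeq⟩ := hqs _ hv
        rw [hkeq] at ht'd
        have htri1 : G.dist z (g.getVert k) ≤ Δ + KRM1 C Δ := by
          have h := hconn.dist_triangle (u := z) (v := z₁) (w := g.getVert k)
          omega
        have hp := geodesic_dist_getVert hconn g hg (i := k) (j := t0) (by omega) (by omega)
        have htri2 := hconn.dist_triangle (u := g.getVert k) (v := z) (w := g.getVert t0)
        have hcm : G.dist (g.getVert k) z = G.dist z (g.getVert k) := SimpleGraph.dist_comm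
        omega
    · -- z₁ ∈ A (g.getVert ta) y'
      obtain ⟨z₂, hz₂or, hdz₂⟩ := hslim (g.getVert ta) y' (g.getVert tb) z₁ hz₁
      rcases hz₂or with hz₂ | hz₂
      · -- z₂ ∈ A (g.getVert ta) (g.getVert tb) : main case
        obtain ⟨q, hql, hqs⟩ := exists_subwalk g ta tb (by omega) htb_le
        have hlen2S : q.length ≤ 2^(Nat.clog 2 (2*S)) := by
          refine le_trans ?_ (Nat.le_pow_clog (by norm_num) _)
          omega
        obtain ⟨v, hv, hdv⟩ := subdiv hconn A C Δ hlocal hslim (Nat.clog 2 (2*S))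
          (g.getVert ta) (g.getVert tb) q hlen2S z₂ hz₂
        obtain ⟨k, hk1, hk2, hkeq⟩ := hqs v hv
        have hrv : r ≤ G.dist z v := by
          rw [hkeq]
          exact hmin k (Finset.mem_range.mpr (by omega))
        set D := Δ * Nat.clog 2 (2*S) with hD
        have hchain : G.dist z v ≤ Δ + (Δ + (C + D)) := by
          have h1 := hconn.dist_triangle (u := z) (v := z₁) (w := v)
          have h2 := hconn.dist_triangle (u := z₁) (v := z₂) (w := v)
          omega
        have hfinal : r ≤ (2*Δ + C) + Δ * Nat.clog 2 (2*r + 2*(KRM1 C Δ) + 4*Δ + 4) := by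
          have hSeq : 2*S = 2*r + 2*(KRM1 C Δ) + 4*Δ + 4 := by omega
          rw [← hSeq]
          omega
        exact arith_solve (2*Δ + C) Δ r (KRM1 C Δ) rfl hfinal
      · -- z₂ ∈ A (g.getVert tb) y'
        by_cases htbN : tb = N
        · have hNv : g.getVert tb = y' := by rw [htbN, hN]; exact Walk.getVert_length g
          rw [hNv] at hz₂
          have hz₂y := hsingle y' z₂ hz₂
          have h0 : r ≤ G.dist z (g.getVert tb) := hmin tb (Finset.mem_range.mpr (by omega))
          rw [hNv] at h0
          have hy' : G.dist z y' ≤ Δ + Δ := by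
            have h1 := hconn.dist_triangle (u := z) (v := z₁) (w := y')
            have h2 : G.dist z₁ y' ≤ Δ := by rw [← hz₂y]; exact hdz₂
            omega
          omega
        · have htbS : tb = t0 + S := by omega
          have hNv : g.getVert N = y' := by rw [hN]; exact Walk.getVert_length g
          obtain ⟨q, hql, hqs⟩ := exists_subwalk g tb N htb_le (le_refl _)
          set q' := q.copy rfl hNv with hq'
          have hq'len : q'.length = N - tb := by rw [Walk.length_copy, hql]
          have hdby : G.dist (g.getVert tb) y' = N - tb := by
            have := geodesic_dist_getVert₁ hconn g hg htb_le
            rwa [← hN] at this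
          have hq'geo : q'.length = G.dist (g.getVert tb) y' := by rw [hq'len, hdby]
          have hq'n : q'.length < n := by omega
          obtain ⟨t', ht'le, ht'd⟩ := ih q'.length hq'n (g.getVert tb) y' q' hq'geo (le_refl _) z₂ hz₂
          have hv : q'.getVert t' ∈ q'.support := getVert_mem_support _ ht'le
          rw [Walk.support_copy] at hv
          obtain ⟨k, hk1, hk2, hkeq⟩ := hqs _ hv
          rw [hkeq] at ht'd
          have htri1 : G.dist z (g.getVert k) ≤ Δ + (Δ + KRM1 C Δ) := by
            have h1 := hconn.dist_triangle (u := z) (v := z₁) (w := g.getVert k)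
            have h2 := hconn.dist_triangle (u := z₁) (v := z₂) (w := g.getVert k)
            omega
          have hp := geodesic_dist_getVert hconn g hg (i := t0) (j := k) (by omega) (by omega)
          have htri2 := hconn.dist_triangle (u := g.getVert t0) (v := z) (w := g.getVert k)
          have hcm : G.dist (g.getVert t0) z = G.dist z (g.getVert t0) := SimpleGraph.dist_comm
          omega

/-- Discrete connectedness argument: every point of a geodesic is near the chain `A y y'`. -/
lemma ivt_aux (hconn : G.Connected) {y y' : V} (g : G.Walk y y')
    (hg : g.length = G.dist y y') (M1 : ℕ) :
    ∀ (l : List V) (z0 : V) (t0 : ℕ),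
      List.Chain' (fun a b => G.dist a b ≤ 1) (z0 :: l) →
      (∀ z ∈ z0 :: l, ∃ t, t ≤ g.length ∧ G.dist z (g.getVert t) ≤ M1) →
      (z0 :: l).getLast? = some y' →
      t0 ≤ g.length → G.dist z0 (g.getVert t0) ≤ M1 →
      ∀ s, t0 ≤ s → s ≤ g.length → ∃ zz ∈ z0 :: l, G.dist (g.getVert s) zz ≤ 3*M1 + 1 := by
  intro l
  induction l with
  | nil =>
    intro z0 t0 _ _ hlast ht0 hd0 s hs1 hs2
    have hz0 : z0 = y' := by simpa using hlast
    subst hz0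
    have h1 : G.dist (g.getVert t0) z0 = g.length - t0 := geodesic_dist_getVert₁ hconn g hg ht0
    have h2 : G.dist (g.getVert s) z0 = g.length - s := geodesic_dist_getVert₁ hconn g hg hs2
    have hc : G.dist z0 (g.getVert t0) = G.dist (g.getVert t0) z0 := SimpleGraph.dist_comm
    exact ⟨z0, by simp, by omega⟩
  | cons z1 l' ih =>
    intro z0 t0 hch hproj hlast ht0 hd0 s hs1 hs2
    obtain ⟨hstep, hch'⟩ := List.isChain_cons_cons.mp hch
    obtain ⟨t1, ht1, hd1⟩ := hproj z1 (by simp)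
    have hjump : G.dist (g.getVert t0) (g.getVert t1) ≤ 2*M1 + 1 := by
      have h1 := hconn.dist_triangle (u := g.getVert t0) (v := z0) (w := g.getVert t1)
      have h2 := hconn.dist_triangle (u := z0) (v := z1) (w := g.getVert t1)
      have hc1 : G.dist (g.getVert t0) z0 = G.dist z0 (g.getVert t0) := SimpleGraph.dist_comm
      omega
    have hposdiff : (t1 ≤ t0 + (2*M1+1)) ∧ (t0 ≤ t1 + (2*M1+1)) := by
      rcases le_total t0 t1 with hle | hle
      · have := geodesic_dist_getVert hconn g hg hle ht1; omega
      · have h := geodesic_dist_getVert hconn g hg hle ht0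
        have hc : G.dist (g.getVert t1) (g.getVert t0) = G.dist (g.getVert t0) (g.getVert t1) :=
          SimpleGraph.dist_comm
        omega
    rcases le_or_gt t1 s with hcase | hcase
    · obtain ⟨zz, hzz, hdzz⟩ := ih z1 t1 hch'
        (fun z hz => hproj z (List.mem_cons_of_mem _ hz))
        (by rwa [List.getLast?_cons_cons] at hlast) ht1 hd1 s hcase hs2
      exact ⟨zz, List.mem_cons_of_mem _ hzz, hdzz⟩
    · refine ⟨z0, by simp, ?_⟩
      have hst0 : G.dist (g.getVert t0) (g.getVert s) = s - t0 :=
        geodesic_dist_getVert hconn g hg hs1 hs2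
      have h1 := hconn.dist_triangle (u := g.getVert s) (v := g.getVert t0) (w := z0)
      have hc1 : G.dist (g.getVert s) (g.getVert t0) = G.dist (g.getVert t0) (g.getVert s) :=
        SimpleGraph.dist_comm
      have hc2 : G.dist (g.getVert t0) z0 = G.dist z0 (g.getVert t0) := SimpleGraph.dist_comm
      omega

/-- Every point of a geodesic is within `3·M₁+1` of the set `A y y'`. -/
lemma geodesic_near (hconn : G.Connected) (A : V → V → Set V) (C Δ : ℕ)
    (hsingle : ∀ y : V, ∀ z ∈ A y y, z = y)
    (hlocal : ∀ y y' : V, G.dist y y' ≤ 1 → ∀ z ∈ A y y', G.dist z y ≤ C)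
    (hslim : ∀ y1 y2 y3 : V, ∀ z ∈ A y1 y2, ∃ z', (z' ∈ A y1 y3 ∨ z' ∈ A y3 y2) ∧ G.dist z z' ≤ Δ)
    (hchain : ∀ y y' : V, ∃ l : List V, List.Chain' (fun a b => G.dist a b ≤ 1) (y :: l) ∧
      (y :: l).getLast? = some y' ∧ ∀ z ∈ y :: l, z ∈ A y y')
    {y y' : V} (g : G.Walk y y') (hg : g.length = G.dist y y') :
    ∀ s, s ≤ g.length → ∃ zz ∈ A y y', G.dist (g.getVert s) zz ≤ 3*(KRM1 C Δ) + 1 := by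
  obtain ⟨l, hch, hlast, hmem⟩ := hchain y y'
  have hproj : ∀ z ∈ y :: l, ∃ t, t ≤ g.length ∧ G.dist z (g.getVert t) ≤ KRM1 C Δ :=
    fun z hz =>
      bootstrap hconn A C Δ hsingle hlocal hslim g.length y y' g hg (le_refl _) z (hmem z hz)
  intro s hs
  have hd00 : G.dist y (g.getVert 0) ≤ KRM1 C Δ := by
    rw [Walk.getVert_zero, SimpleGraph.dist_self]; exact Nat.zero_le _
  obtain ⟨zz, hzz, hd⟩ := ivt_aux hconn g hg (KRM1 C Δ) l y 0 hch hproj hlast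
    (Nat.zero_le _) hd00 s (Nat.zero_le _) hs
  exact ⟨zz, hmem zz hzz, hd⟩

/-- Geodesic triangles are uniformly slim. -/
lemma geodesic_slim (hconn : G.Connected) (A : V → V → Set V) (C Δ : ℕ)
    (hsingle : ∀ y : V, ∀ z ∈ A y y, z = y)
    (hlocal : ∀ y y' : V, G.dist y y' ≤ 1 → ∀ z ∈ A y y', G.dist z y ≤ C)
    (hslim : ∀ y1 y2 y3 : V, ∀ z ∈ A y1 y2, ∃ z', (z' ∈ A y1 y3 ∨ z' ∈ A y3 y2) ∧ G.dist z z' ≤ Δ)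
    (hchain : ∀ y y' : V, ∃ l : List V, List.Chain' (fun a b => G.dist a b ≤ 1) (y :: l) ∧
      (y :: l).getLast? = some y' ∧ ∀ z ∈ y :: l, z ∈ A y y')
    {y1 y2 y3 : V} (g12 : G.Walk y1 y2) (h12 : g12.length = G.dist y1 y2)
    (g13 : G.Walk y1 y3) (h13 : g13.length = G.dist y1 y3)
    (g32 : G.Walk y3 y2) (h32 : g32.length = G.dist y3 y2) :
    ∀ u ∈ g12.support, ∃ v, (v ∈ g13.support ∨ v ∈ g32.support) ∧
      G.dist u v ≤ (3*(KRM1 C Δ) + 1) + Δ + (KRM1 C Δ) := by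
  intro u hu
  obtain ⟨s, hgv, hs⟩ := SimpleGraph.Walk.mem_support_iff_exists_getVert.mp hu
  subst hgv
  obtain ⟨zz, hzz, hd1⟩ :=
    geodesic_near hconn A C Δ hsingle hlocal hslim hchain g12 h12 s hs
  obtain ⟨z', hz'or, hd2⟩ := hslim y1 y2 y3 zz hzz
  rcases hz'or with hz' | hz'
  · obtain ⟨t, ht, hd3⟩ := bootstrap hconn A C Δ hsingle hlocal hslim g13.length y1 y3 g13 h13
      (le_refl _) z' hz'
    refine ⟨g13.getVert t, Or.inl (getVert_mem_support _ ht), ?_⟩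
    have h1 := hconn.dist_triangle (u := g12.getVert s) (v := zz) (w := g13.getVert t)
    have h2 := hconn.dist_triangle (u := zz) (v := z') (w := g13.getVert t)
    omega
  · obtain ⟨t, ht, hd3⟩ := bootstrap hconn A C Δ hsingle hlocal hslim g32.length y3 y2 g32 h32
      (le_refl _) z' hz'
    refine ⟨g32.getVert t, Or.inr (getVert_mem_support _ ht), ?_⟩
    have h1 := hconn.dist_triangle (u := g12.getVert s) (v := zz) (w := g32.getVert t)
    have h2 := hconn.dist_triangle (u := zz) (v := z') (w := g32.getVert t)
    omega

/-- The (doubled) Gromov product is a lower bound for twice the distance to a geodesic. -/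
lemma gp_le (hconn : G.Connected) {x z : V} (g : G.Walk x z) (hg : g.length = G.dist x z)
    (w : V) : ∀ v ∈ g.support,
      (G.dist w x : ℝ) + G.dist w z - G.dist x z ≤ 2 * G.dist w v := by
  intro v hv
  obtain ⟨t, hgv, ht⟩ := SimpleGraph.Walk.mem_support_iff_exists_getVert.mp hv
  subst hgv
  have h1 : G.dist x (g.getVert t) = t := geodesic_dist_getVert₀ hconn g hg ht
  have h2 : G.dist (g.getVert t) z = g.length - t := geodesic_dist_getVert₁ hconn g hg ht
  have htri1 : G.dist w x ≤ G.dist w (g.getVert t) + t := by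
    have := hconn.dist_triangle (u := w) (v := g.getVert t) (w := x)
    have hc : G.dist (g.getVert t) x = G.dist x (g.getVert t) := SimpleGraph.dist_comm
    omega
  have htri2 : G.dist w z ≤ G.dist w (g.getVert t) + (g.length - t) := by
    have := hconn.dist_triangle (u := w) (v := g.getVert t) (w := z)
    omega
  have hsum : G.dist w x + G.dist w z ≤ 2 * G.dist w (g.getVert t) + G.dist x z := by omega
  have hcast : (G.dist w x : ℝ) + G.dist w z ≤ 2 * G.dist w (g.getVert t) + G.dist x z := by
    exact_mod_cast hsum
  linarith

/-- Existence of a coarse midpoint-witness on a chosen geodesic, realizing the Gromov product. -/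
lemma gp_witness (hconn : G.Connected) (gY : ∀ a b : V, G.Walk a b)
    (hgY : ∀ a b, (gY a b).length = G.dist a b) (ΔY : ℕ)
    (hslimg : ∀ y1 y2 y3 : V, ∀ u ∈ (gY y1 y2).support,
      ∃ v, (v ∈ (gY y1 y3).support ∨ v ∈ (gY y3 y2).support) ∧ G.dist u v ≤ ΔY)
    (w x z : V) :
    ∃ v ∈ (gY x z).support, 2*(G.dist w v : ℝ) ≤
      ((G.dist w x : ℝ) + G.dist w z - G.dist x z) + (4*ΔY + 2) := by
  have cc : ∀ p q : V, (G.dist p q : ℝ) = (G.dist q p : ℝ) := by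
    intro p q
    exact_mod_cast congrArg (Nat.cast : ℕ → ℝ)
      (SimpleGraph.dist_comm (G := G) (u := p) (v := q))
  have htri : ∀ p q s : V, (G.dist p s : ℝ) ≤ (G.dist p q : ℝ) + (G.dist q s : ℝ) := by
    intro p q s; exact_mod_cast hconn.dist_triangle (u := p) (v := q) (w := s)
  set P : ℝ := (G.dist x w : ℝ) + G.dist x z - G.dist w z with hP
  have hP0 : 0 ≤ P := by
    have h := htri w x z
    have := cc w x
    rw [hP]; linarith
  set t' := ⌊P/2⌋₊ with ht'def
  have hfle : (t' : ℝ) ≤ P/2 := Nat.floor_le (by linarith)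
  have hflt : P/2 < t' + 1 := Nat.lt_floor_add_one _
  have ht'N : t' ≤ (gY x z).length := by
    rw [hgY x z]
    have h1 : P/2 ≤ (G.dist x z : ℝ) := by
      have h := htri x z w
      have h2c := cc z w
      rw [hP]; linarith
    have : (t' : ℝ) ≤ (G.dist x z : ℝ) := le_trans hfle h1
    exact_mod_cast this
  set u0 := (gY x z).getVert t' with hu0
  have hxu : G.dist x u0 = t' := geodesic_dist_getVert₀ hconn _ (hgY x z) ht'N
  have huz : G.dist u0 z = (gY x z).length - t' := geodesic_dist_getVert₁ hconn _ (hgY x z) ht'N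
  have huzR : (G.dist u0 z : ℝ) = (G.dist x z : ℝ) - t' := by
    have : ((G.dist u0 z : ℕ) : ℝ) = (((gY x z).length - t' : ℕ) : ℝ) := by exact_mod_cast huz
    rw [Nat.cast_sub ht'N] at this
    rw [this]
    congr 1
    exact_mod_cast hgY x z
  obtain ⟨v, hvor, hdv⟩ := hslimg x z w u0 (getVert_mem_support _ ht'N)
  rcases hvor with hv | hv
  · -- v on the geodesic from x to w
    refine ⟨u0, getVert_mem_support _ ht'N, ?_⟩
    obtain ⟨j, hjv, hj⟩ := SimpleGraph.Walk.mem_support_iff_exists_getVert.mp hv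
    have hxv : G.dist x ((gY x w).getVert j) = j := geodesic_dist_getVert₀ hconn _ (hgY x w) hj
    have hvw : G.dist ((gY x w).getVert j) w = (gY x w).length - j :=
      geodesic_dist_getVert₁ hconn _ (hgY x w) hj
    rw [hjv] at hxv hvw
    have hvwR : (G.dist v w : ℝ) = (G.dist x w : ℝ) - j := by
      have : ((G.dist v w : ℕ) : ℝ) = (((gY x w).length - j : ℕ) : ℝ) := by exact_mod_cast hvw
      rw [Nat.cast_sub hj] at this
      rw [this]
      congr 1
      exact_mod_cast hgY x w
    have e1 : (G.dist w u0 : ℝ) ≤ (G.dist w v : ℝ) + ΔY := by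
      have h := hconn.dist_triangle (u := w) (v := v) (w := u0)
      have hc : G.dist v u0 = G.dist u0 v := SimpleGraph.dist_comm
      have hΔ : G.dist u0 v ≤ ΔY := hdv
      exact_mod_cast by omega
    have e3 : (t' : ℝ) ≤ (j : ℝ) + ΔY := by
      have h := hconn.dist_triangle (u := x) (v := v) (w := u0)
      have hc : G.dist v u0 = G.dist u0 v := SimpleGraph.dist_comm
      have hΔ : G.dist u0 v ≤ ΔY := hdv
      exact_mod_cast by omega
    have e4 := cc w v
    have e5 := cc w x
    rw [hP] at hflt
    linarith
  · -- v on the geodesic from w to z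
    refine ⟨u0, getVert_mem_support _ ht'N, ?_⟩
    obtain ⟨j, hjv, hj⟩ := SimpleGraph.Walk.mem_support_iff_exists_getVert.mp hv
    have hwv : G.dist w ((gY w z).getVert j) = j := geodesic_dist_getVert₀ hconn _ (hgY w z) hj
    have hvz : G.dist ((gY w z).getVert j) z = (gY w z).length - j :=
      geodesic_dist_getVert₁ hconn _ (hgY w z) hj
    rw [hjv] at hwv hvz
    have hvzR : (G.dist v z : ℝ) = (G.dist w z : ℝ) - j := by
      have : ((G.dist v z : ℕ) : ℝ) = (((gY w z).length - j : ℕ) : ℝ) := by exact_mod_cast hvz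
      rw [Nat.cast_sub hj] at this
      rw [this]
      congr 1
      exact_mod_cast hgY w z
    have e1 : (G.dist w u0 : ℝ) ≤ (j : ℝ) + ΔY := by
      have h := hconn.dist_triangle (u := w) (v := v) (w := u0)
      have hc : G.dist v u0 = G.dist u0 v := SimpleGraph.dist_comm
      have hΔ : G.dist u0 v ≤ ΔY := hdv
      exact_mod_cast by omega
    have e2 : (G.dist u0 z : ℝ) ≤ ΔY + (G.dist v z : ℝ) := by
      have h := hconn.dist_triangle (u := u0) (v := v) (w := z)
      have hΔ : G.dist u0 v ≤ ΔY := hdv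
      exact_mod_cast by omega
    rw [hP] at hfle
    have e5 := cc w x
    linarith [huzR, hvzR]

/-- The abstract Kapovich–Rafi/Bowditch guessing-geodesics criterion. -/
theorem criterion (hconn : G.Connected) (A : V → V → Set V) (C Δ : ℕ)
    (hsingle : ∀ y : V, ∀ z ∈ A y y, z = y)
    (hlocal : ∀ y y' : V, G.dist y y' ≤ 1 → ∀ z ∈ A y y', G.dist z y ≤ C)
    (hslim : ∀ y1 y2 y3 : V, ∀ z ∈ A y1 y2, ∃ z', (z' ∈ A y1 y3 ∨ z' ∈ A y3 y2) ∧ G.dist z z' ≤ Δ)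
    (hchain : ∀ y y' : V, ∃ l : List V, List.Chain' (fun a b => G.dist a b ≤ 1) (y :: l) ∧
      (y :: l).getLast? = some y' ∧ ∀ z ∈ y :: l, z ∈ A y y') :
    GraphHyperbolic G := by
  choose gY hgY using fun a b : V => hconn.exists_walk_length_eq_dist a b
  set ΔY := (3*(KRM1 C Δ) + 1) + Δ + (KRM1 C Δ) with hΔY
  have hslimg : ∀ y1 y2 y3 : V, ∀ u ∈ (gY y1 y2).support,
      ∃ v, (v ∈ (gY y1 y3).support ∨ v ∈ (gY y3 y2).support) ∧ G.dist u v ≤ ΔY :=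
    fun y1 y2 y3 => geodesic_slim hconn A C Δ hsingle hlocal hslim hchain
      (gY y1 y2) (hgY _ _) (gY y1 y3) (hgY _ _) (gY y3 y2) (hgY _ _)
  have hprod : ∀ w x y z : V,
      min ((G.dist w x : ℝ) + G.dist w y - G.dist x y)
          ((G.dist w y : ℝ) + G.dist w z - G.dist y z)
        ≤ ((G.dist w x : ℝ) + G.dist w z - G.dist x z) + (6*ΔY + 2) := by
    intro w x y z
    obtain ⟨u0, hu0, hbu⟩ := gp_witness hconn gY hgY ΔY hslimg w x z
    obtain ⟨v, hvor, hdv⟩ := hslimg x z y u0 hu0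
    have h2 : (G.dist w v : ℝ) ≤ (G.dist w u0 : ℝ) + ΔY := by
      have h := hconn.dist_triangle (u := w) (v := u0) (w := v)
      exact_mod_cast by omega
    rcases hvor with hv | hv
    · have h1 := gp_le hconn (gY x y) (hgY x y) w v hv
      have hminle := min_le_left ((G.dist w x : ℝ) + G.dist w y - G.dist x y)
          ((G.dist w y : ℝ) + G.dist w z - G.dist y z)
      linarith
    · have h1 := gp_le hconn (gY y z) (hgY y z) w v hv
      have hminle := min_le_right ((G.dist w x : ℝ) + G.dist w y - G.dist x y)
          ((G.dist w y : ℝ) + G.dist w z - G.dist y z)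
      linarith
  refine ⟨((3*ΔY + 1 : ℕ) : ℝ), by positivity, ?_⟩
  intro x y z w
  have cc : ∀ p q : V, (G.dist p q : ℝ) = (G.dist q p : ℝ) := by
    intro p q
    exact_mod_cast congrArg (Nat.cast : ℕ → ℝ)
      (SimpleGraph.dist_comm (G := G) (u := p) (v := q))
  have H := hprod z x w y
  have h2δ : 2*(((3*ΔY + 1 : ℕ)) : ℝ) = 6*ΔY + 2 := by push_cast; ring
  rcases le_total ((G.dist z x : ℝ) + G.dist z w - G.dist x w)
      ((G.dist z w : ℝ) + G.dist z y - G.dist w y) with hm | hm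
  · rw [min_eq_left hm] at H
    refine le_trans ?_ (add_le_add_left (le_max_right _ _) _)
    have c1 := cc z y; have c2 := cc z x; have c3 := cc z w; have c4 := cc w y
    linarith
  · rw [min_eq_right hm] at H
    refine le_trans ?_ (add_le_add_left (le_max_left _ _) _)
    have c1 := cc z y; have c2 := cc z x; have c3 := cc z w; have c4 := cc w y
    linarith

lemma getLast?_map' {α β : Type*} (f : α → β) :
    ∀ (l : List α) (h : l ≠ []), (l.map f).getLast? = some (f (l.getLast h)) := by
  intro l
  induction l with
  | nil => intro h; exact absurd rfl h
  | cons a l ih =>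
    intro _
    cases l with
    | nil => simp
    | cons b l' =>
      have := ih (by simp)
      simp only [List.map_cons] at this ⊢
      rw [List.getLast?_cons_cons, List.getLast_cons_cons]
      exact this

end Criterion

end KR17

theorem stmt17_aux {VX VY : Type*} (X : SimpleGraph VX) (Y : SimpleGraph VY)
    (hX : X.Connected) (hY : Y.Connected)
    (τ : VX → VY) (hsurj : Function.Surjective τ)
    (hlip : ∀ a b : VX, X.Adj a b → τ a = τ b ∨ Y.Adj (τ a) (τ b))
    (C : ℕ)
    (hfib : ∀ a b : VX, Y.dist (τ a) (τ b) ≤ 1 → ∀ p : X.Walk a b,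
      p.length = X.dist a b → ∀ u ∈ p.support, ∀ v ∈ p.support,
        Y.dist (τ u) (τ v) ≤ C)
    (hhyp : GraphHyperbolic X) : GraphHyperbolic Y := by
  classical
  obtain ⟨δX, hδX0, h4X⟩ := hhyp
  choose σ hσ using hsurj
  choose geoX hgeoX using fun a b : VX => hX.exists_walk_length_eq_dist a b
  have hstep1 : ∀ a b : VX, X.Adj a b → Y.dist (τ a) (τ b) ≤ 1 := by
    intro a b h
    rcases hlip a b h with he | ha
    · rw [he, SimpleGraph.dist_self]; omega
    · have := SimpleGraph.dist_le (SimpleGraph.Walk.cons ha SimpleGraph.Walk.nil)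
      simpa using this
  have hwalk : ∀ (a b : VX) (p : X.Walk a b), Y.dist (τ a) (τ b) ≤ p.length := by
    intro a b p
    induction p with
    | nil => simp
    | cons h p ih =>
      rename_i u v w
      have hstep := hstep1 u v h
      have htr := hY.dist_triangle (u := τ u) (v := τ v) (w := τ w)
      rw [SimpleGraph.Walk.length_cons]
      omega
  have hlipd : ∀ a b : VX, Y.dist (τ a) (τ b) ≤ X.dist a b := by
    intro a b
    have := hwalk a b (geoX a b)
    rwa [hgeoX] at this
  set Δ : ℕ := ⌈(4:ℝ)*δX⌉₊ with hΔ
  set A : VY → VY → Set VY :=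
    fun y y' => {z | ∃ u ∈ (geoX (σ y) (σ y')).support, τ u = z} with hA
  have hsingle : ∀ y : VY, ∀ z ∈ A y y, z = y := by
    intro y z hz
    obtain ⟨u, hu, rfl⟩ := hz
    obtain ⟨t, hgv, ht⟩ := SimpleGraph.Walk.mem_support_iff_exists_getVert.mp hu
    have hlen : (geoX (σ y) (σ y)).length = 0 := by
      rw [hgeoX]; simp
    have ht0 : t = 0 := by omega
    rw [← hgv, ht0, SimpleGraph.Walk.getVert_zero]
    exact hσ y
  have hlocal : ∀ y y' : VY, Y.dist y y' ≤ 1 → ∀ z ∈ A y y', Y.dist z y ≤ C := by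
    intro y y' hd z hz
    obtain ⟨u, hu, rfl⟩ := hz
    have hd' : Y.dist (τ (σ y)) (τ (σ y')) ≤ 1 := by rw [hσ, hσ]; exact hd
    have := hfib (σ y) (σ y') hd' (geoX _ _) (hgeoX _ _) u hu (σ y)
      ((geoX _ _).start_mem_support)
    rwa [hσ] at this
  have hslim : ∀ y1 y2 y3 : VY, ∀ z ∈ A y1 y2,
      ∃ z', (z' ∈ A y1 y3 ∨ z' ∈ A y3 y2) ∧ Y.dist z z' ≤ Δ := by
    intro y1 y2 y3 z hz
    obtain ⟨u, hu, rfl⟩ := hz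
    obtain ⟨v, hvor, hdv⟩ := KR17.rips hX geoX hgeoX δX hδX0 h4X (σ y1) (σ y2) (σ y3) u hu
    refine ⟨τ v, ?_, ?_⟩
    · rcases hvor with hv | hv
      · exact Or.inl ⟨v, hv, rfl⟩
      · exact Or.inr ⟨v, hv, rfl⟩
    · have h1 : (Y.dist (τ u) (τ v) : ℝ) ≤ 4*δX := by
        refine le_trans ?_ hdv
        exact_mod_cast hlipd u v
      have h2 : (Y.dist (τ u) (τ v) : ℝ) ≤ ((⌈(4:ℝ)*δX⌉₊ : ℕ) : ℝ) :=
        le_trans h1 (Nat.le_ceil _)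
      rw [hΔ]
      exact_mod_cast h2
  have hchain : ∀ y y' : VY, ∃ l : List VY,
      List.Chain' (fun a b => Y.dist a b ≤ 1) (y :: l) ∧
      (y :: l).getLast? = some y' ∧ ∀ z ∈ y :: l, z ∈ A y y' := by
    intro y y'
    refine ⟨((geoX (σ y) (σ y')).support.tail).map τ, ?_⟩
    have hsup : (geoX (σ y) (σ y')).support.map τ
        = y :: ((geoX (σ y) (σ y')).support.tail).map τ := by
      conv_lhs => rw [SimpleGraph.Walk.support_eq_cons (geoX (σ y) (σ y'))]
      rw [List.map_cons, hσ]
    refine ⟨?_, ?_, ?_⟩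
    · rw [← hsup]
      exact List.isChain_map_of_isChain τ (fun a b hab => hstep1 a b hab)
        (SimpleGraph.Walk.isChain_adj_support (geoX (σ y) (σ y')))
    · rw [← hsup]
      have hne := (geoX (σ y) (σ y')).support_ne_nil
      rw [KR17.getLast?_map' τ _ hne, SimpleGraph.Walk.getLast_support, hσ]
    · intro z hz
      rw [← hsup] at hz
      obtain ⟨u, hu, rfl⟩ := List.mem_map.mp hz
      exact ⟨u, hu, rfl⟩
  exact KR17.criterion hY A C Δ hsingle hlocal hslim hchain


/-- Kapovich–Rafi criterion: let `τ` be a surjective Lipschitz map between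
connected graphs `X` and `Y` such that for any two vertices of `X` whose images are at
distance at most 1, every geodesic between them has `τ`-image of diameter at most a
uniform constant `C`. If `X` is Gromov hyperbolic, then so is `Y`. -/
theorem stmt17 {VX VY : Type*} (X : SimpleGraph VX) (Y : SimpleGraph VY)
    (hX : X.Connected) (hY : Y.Connected)
    (τ : VX → VY) (hsurj : Function.Surjective τ)
    (hlip : ∀ a b : VX, X.Adj a b → τ a = τ b ∨ Y.Adj (τ a) (τ b))
    (C : ℕ)
    (hfib : ∀ a b : VX, Y.dist (τ a) (τ b) ≤ 1 → ∀ p : X.Walk a b,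
      p.length = X.dist a b → ∀ u ∈ p.support, ∀ v ∈ p.support,
        Y.dist (τ u) (τ v) ≤ C)
    (hhyp : GraphHyperbolic X) : GraphHyperbolic Y := by
  exact stmt17_aux X Y hX hY τ hsurj hlip C hfib hhyp
end
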